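/- Let H be a Hermitian n×n complex matrix and let β > 0. Define the Gibbs state ρ_Gibbs = e^{−βH}/Tr(e^{−βH}) and the free energy functional F(D) = Tr(H D) − (1/β) S(D). Then for every density matrix D on ℂ^n one has F(ρ_Gibbs) ≤ F(D); moreover F(ρ_Gibbs) = −(1/β) log Tr(e^{−βH}). -/

import Mathlib

open scoped Kronecker ComplexOrder
open Matrix

noncomputable section

namespace TAL

/-- A density matrix: positive semidefinite with trace `1`. -/
def IsDensityMatrix {k : Type*} [Fintype k] [DecidableEq k] (D : Matrix k k ℂ) : Prop :=
  D.PosSemidef ∧ D.trace = 1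

/-- Functional calculus for Hermitian matrices via the spectral decomposition
(junk value `0` on non-Hermitian matrices). -/
def hermCalc {k : Type*} [Fintype k] [DecidableEq k] (f : ℝ → ℝ) (A : Matrix k k ℂ) :
    Matrix k k ℂ :=
  if hA : A.IsHermitian then
    (hA.eigenvectorUnitary : Matrix k k ℂ) *
      Matrix.diagonal (fun i => (f (hA.eigenvalues i) : ℂ)) *
        star (hA.eigenvectorUnitary : Matrix k k ℂ)
  else 0

/-- Matrix logarithm via the spectral decomposition. -/
def matLog {k : Type*} [Fintype k] [DecidableEq k] (A : Matrix k k ℂ) : Matrix k k ℂ :=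
  hermCalc Real.log A

/-- The von Neumann entropy `S(D) = -Tr (D log D)`, computed through the eigenvalues,
with the convention `0 * log 0 = 0` (junk value `0` on non-Hermitian matrices). -/
def vnEntropy {k : Type*} [Fintype k] [DecidableEq k] (A : Matrix k k ℂ) : ℝ :=
  if hA : A.IsHermitian then ∑ i, Real.negMulLog (hA.eigenvalues i) else 0

/-- The Umegaki relative entropy `S(D | E) = Tr (D (log D - log E))`. -/
def relEntropy {k : Type*} [Fintype k] [DecidableEq k] (D E : Matrix k k ℂ) : ℝ :=
  ((D * (matLog D - matLog E)).trace).re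

/-- Partial trace over the second (right) tensor factor. -/
def ptraceR {k₁ k₂ : Type*} [Fintype k₂] (D : Matrix (k₁ × k₂) (k₁ × k₂) ℂ) :
    Matrix k₁ k₁ ℂ :=
  Matrix.of fun i j => ∑ s : k₂, D (i, s) (j, s)

/-- Partial trace over the first (left) tensor factor. -/
def ptraceL {k₁ k₂ : Type*} [Fintype k₁] (D : Matrix (k₁ × k₂) (k₁ × k₂) ℂ) :
    Matrix k₂ k₂ ℂ :=
  Matrix.of fun i j => ∑ s : k₁, D (s, i) (s, j)

/-- The mutual entropy `I_D(A:B) = S(D_A) + S(D_B) - S(D)`. -/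
def mutualEntropy {k₁ k₂ : Type*} [Fintype k₁] [Fintype k₂] [DecidableEq k₁] [DecidableEq k₂]
    (D : Matrix (k₁ × k₂) (k₁ × k₂) ℂ) : ℝ :=
  vnEntropy (ptraceR D) + vnEntropy (ptraceL D) - vnEntropy D

/-- The Gibbs density matrix `e^{-β H} / Tr(e^{-β H})`. -/
def gibbs {k : Type*} [Fintype k] [DecidableEq k] (β : ℝ) (H : Matrix k k ℂ) :
    Matrix k k ℂ :=
  (NormedSpace.exp ((-(β : ℂ)) • H)).trace⁻¹ • NormedSpace.exp ((-(β : ℂ)) • H)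

/-- The free energy functional `F(D) = Tr(H D) - β⁻¹ S(D)` (real part of the trace). -/
def freeEnergy {k : Type*} [Fintype k] [DecidableEq k] (β : ℝ) (H D : Matrix k k ℂ) : ℝ :=
  ((H * D).trace).re - β⁻¹ * vnEntropy D

/-- The ℓ²-operator norm of a matrix. -/
def opNorm {k : Type*} [Fintype k] [DecidableEq k] (A : Matrix k k ℂ) : ℝ :=
  ‖(Matrix.toEuclideanCLM (𝕜 := ℂ) A : EuclideanSpace ℂ k →L[ℂ] EuclideanSpace ℂ k)‖

/-- The trace norm `‖X‖₁ = Tr ((X* X)^{1/2})`. -/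
def traceNorm {k : Type*} [Fintype k] [DecidableEq k] (X : Matrix k k ℂ) : ℝ :=
  (((Matrix.posSemidef_conjTranspose_mul_self X).1.eigenvectorUnitary.1 *
      Matrix.diagonal (fun i =>
        ((Real.sqrt ((Matrix.posSemidef_conjTranspose_mul_self X).1.eigenvalues i) : ℝ) : ℂ)) *
      (star (Matrix.posSemidef_conjTranspose_mul_self X).1.eigenvectorUnitary :
        Matrix k k ℂ)).trace).re


/-- The perturbed density matrix `D^h = e^{log D + h} / Tr(e^{log D + h})`. -/
def pert {k : Type*} [Fintype k] [DecidableEq k] (D h : Matrix k k ℂ) : Matrix k k ℂ :=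
  (NormedSpace.exp (matLog D + h)).trace⁻¹ • NormedSpace.exp (matLog D + h)

section Auxiliary

variable {k : Type*} [Fintype k] [DecidableEq k]

lemma contOn (f : ℝ → ℝ) (s : Set ℝ) (hs : s.Finite) : ContinuousOn f s :=
  hs.continuousOn _

lemma exp_unitary_conj (U : Matrix.unitaryGroup k ℂ) (D : Matrix k k ℂ) :
    NormedSpace.exp ((U : Matrix k k ℂ) * D * star (U : Matrix k k ℂ)) =
      (U : Matrix k k ℂ) * NormedSpace.exp D * star (U : Matrix k k ℂ) := by
  simpa [Unitary.toUnits] using Matrix.exp_units_conj (Unitary.toUnits U) D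

lemma trace_unitary_conj (U : Matrix.unitaryGroup k ℂ) (D : Matrix k k ℂ) :
    ((U : Matrix k k ℂ) * D * star (U : Matrix k k ℂ)).trace = D.trace := by
  rw [Matrix.trace_mul_cycle]
  simp [Unitary.star_mul_self_of_mem U.2]

lemma exp_smul_herm {A : Matrix k k ℂ} (hA : A.IsHermitian) (c : ℝ) :
    NormedSpace.exp ((c : ℂ) • A) = hA.cfc (fun x => Real.exp (c * x)) := by
  have h1 : (c : ℂ) • A = (hA.eigenvectorUnitary : Matrix k k ℂ) *
      Matrix.diagonal (fun i => ((c * hA.eigenvalues i : ℝ) : ℂ)) *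
        star (hA.eigenvectorUnitary : Matrix k k ℂ) := by
    conv_lhs => rw [hA.spectral_theorem, Unitary.conjStarAlgAut_apply]
    rw [← Matrix.smul_mul, ← Matrix.mul_smul]
    congr 2
    ext i j
    by_cases h : i = j <;>
      simp [Matrix.diagonal_apply, h, Function.comp, Complex.ofReal_mul]
  rw [h1, exp_unitary_conj hA.eigenvectorUnitary, Matrix.IsHermitian.cfc, Unitary.conjStarAlgAut_apply]
  congr 2
  rw [Matrix.exp_diagonal]
  simp only [Pi.exp_def, ← Complex.exp_eq_exp_ℂ]
  ext i j
  by_cases h : i = j <;>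
    simp [Matrix.diagonal_apply, h, Function.comp, Complex.ofReal_exp]

lemma cfc'_trace {A : Matrix k k ℂ} (hA : A.IsHermitian) (f : ℝ → ℝ) :
    (hA.cfc f).trace = ∑ i, (f (hA.eigenvalues i) : ℂ) := by
  rw [Matrix.IsHermitian.cfc, Unitary.conjStarAlgAut_apply, trace_unitary_conj hA.eigenvectorUnitary]
  simp [Matrix.trace_diagonal]

lemma vnEntropy_eq {A : Matrix k k ℂ} (hA : A.IsHermitian) :
    vnEntropy A = ∑ i, Real.negMulLog (hA.eigenvalues i) := by
  simp [vnEntropy, hA]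

lemma vnEntropy_cfc' {A : Matrix k k ℂ} (hA : A.IsHermitian) (g : ℝ → ℝ) :
    vnEntropy (hA.cfc g) = ∑ i, Real.negMulLog (g (hA.eigenvalues i)) := by
  have hsa : IsSelfAdjoint A := hA
  have h1 : hA.cfc g = cfc g A := (hA.cfc_eq g).symm
  have h2 : (hA.cfc g).IsHermitian := by
    rw [h1]; exact (cfc_predicate g A : IsSelfAdjoint _)
  rw [vnEntropy_eq h2]
  have h3 : h2.cfc Real.negMulLog = hA.cfc (Real.negMulLog ∘ g) := by
    rw [← Matrix.IsHermitian.cfc_eq (hA := h2), ← Matrix.IsHermitian.cfc_eq (hA := hA),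
      ← Matrix.IsHermitian.cfc_eq (hA := hA)]
    exact (cfc_comp Real.negMulLog g A hsa
        (contOn _ _ ((Matrix.finite_real_spectrum (A := A)).image g))
        (contOn _ _ (Matrix.finite_real_spectrum (A := A)))).symm
  have h4 := cfc'_trace h2 Real.negMulLog
  rw [h3, cfc'_trace hA] at h4
  have := congrArg Complex.re h4
  simpa using this.symm

lemma conj_mul_conj (U : Matrix.unitaryGroup k ℂ) (D E : Matrix k k ℂ) :
    ((U : Matrix k k ℂ) * D * star (U : Matrix k k ℂ)) *
      ((U : Matrix k k ℂ) * E * star (U : Matrix k k ℂ)) =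
    (U : Matrix k k ℂ) * (D * E) * star (U : Matrix k k ℂ) := by
  have h1 : star (U : Matrix k k ℂ) * (U : Matrix k k ℂ) = 1 :=
    Unitary.star_mul_self_of_mem U.2
  calc ((U : Matrix k k ℂ) * D * star (U : Matrix k k ℂ)) *
      ((U : Matrix k k ℂ) * E * star (U : Matrix k k ℂ))
      = (U : Matrix k k ℂ) * (D * ((star (U : Matrix k k ℂ) * (U : Matrix k k ℂ)) * E))
        * star (U : Matrix k k ℂ) := by simp only [mul_assoc]
    _ = _ := by rw [h1, one_mul]

lemma cfc'_mul {A : Matrix k k ℂ} (hA : A.IsHermitian) (f g : ℝ → ℝ) :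
    hA.cfc f * hA.cfc g = hA.cfc (fun x => f x * g x) := by
  simp only [Matrix.IsHermitian.cfc, Unitary.conjStarAlgAut_apply]
  rw [conj_mul_conj, Matrix.diagonal_mul_diagonal]
  congr 2
  ext i j
  by_cases h : i = j <;> simp [Matrix.diagonal_apply, h, Function.comp]

lemma cfc'_smul {A : Matrix k k ℂ} (hA : A.IsHermitian) (c : ℝ) (f : ℝ → ℝ) :
    (c : ℂ) • hA.cfc f = hA.cfc (fun x => c * f x) := by
  simp only [Matrix.IsHermitian.cfc, Unitary.conjStarAlgAut_apply]
  rw [← Matrix.smul_mul, ← Matrix.mul_smul]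
  congr 2
  ext i j
  by_cases h : i = j <;> simp [Matrix.diagonal_apply, h, Function.comp, Complex.ofReal_mul]

lemma cfc'_id {A : Matrix k k ℂ} (hA : A.IsHermitian) : hA.cfc (fun x => x) = A := by
  rw [Matrix.IsHermitian.cfc]
  exact hA.spectral_theorem.symm

lemma exp_sum_le {ι : Type*} [Fintype ι] (w a : ι → ℝ) (hw : ∀ i, 0 ≤ w i)
    (h1 : ∑ i, w i = 1) :
    Real.exp (∑ i, w i * a i) ≤ ∑ i, w i * Real.exp (a i) := by
  have := convexOn_exp.map_sum_le (t := Finset.univ) (w := w) (p := a)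
    (fun i _ => hw i) (by simpa using h1) (fun i _ => Set.mem_univ _)
  simpa [smul_eq_mul] using this

lemma classical_gibbs {ι : Type*} [Fintype ι] (p q : ι → ℝ) (hp : ∀ i, 0 ≤ p i)
    (hp1 : ∑ i, p i = 1) (hq : ∀ i, 0 < q i) :
    ∑ i, (Real.negMulLog (p i) + p i * Real.log (q i)) ≤ Real.log (∑ i, q i) := by
  have hne : Nonempty ι := by
    rcases isEmpty_or_nonempty ι with h | h
    · simp at hp1
    · exact h
  set Z := ∑ i, q i with hZ
  have hZpos : 0 < Z := Finset.sum_pos (fun i _ => hq i) Finset.univ_nonempty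
  have key : ∀ i, Real.negMulLog (p i) + p i * Real.log (q i) - p i * Real.log Z
      ≤ q i / Z - p i := by
    intro i
    rcases eq_or_lt_of_le (hp i) with h0 | h0
    · have hd : 0 ≤ q i / Z := div_nonneg (hq i).le hZpos.le
      simp [← h0, Real.negMulLog]
      linarith
    · have hqZ : 0 < q i / (Z * p i) := div_pos (hq i) (mul_pos hZpos h0)
      have hlog := Real.log_le_sub_one_of_pos hqZ
      have hexpand : Real.log (q i / (Z * p i)) =
          Real.log (q i) - Real.log Z - Real.log (p i) := by
        rw [Real.log_div (ne_of_gt (hq i)) (by positivity),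
          Real.log_mul (ne_of_gt hZpos) (ne_of_gt h0)]
        ring
      have hmul := mul_le_mul_of_nonneg_left hlog (hp i)
      rw [hexpand] at hmul
      have e1 : p i * (q i / (Z * p i) - 1) = q i / Z - p i := by
        field_simp
      have e2 : p i * (Real.log (q i) - Real.log Z - Real.log (p i)) =
          Real.negMulLog (p i) + p i * Real.log (q i) - p i * Real.log Z := by
        rw [Real.negMulLog]; ring
      linarith
  have h2 : ∑ i, (Real.negMulLog (p i) + p i * Real.log (q i) - p i * Real.log Z)
      ≤ ∑ i, (q i / Z - p i) := Finset.sum_le_sum (fun i _ => key i)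
  have h3 : ∑ i, (q i / Z - p i) = 0 := by
    rw [Finset.sum_sub_distrib, ← Finset.sum_div, ← hZ, div_self hZpos.ne', hp1]
    ring
  have h4 : ∑ i, (Real.negMulLog (p i) + p i * Real.log (q i) - p i * Real.log Z)
      = (∑ i, (Real.negMulLog (p i) + p i * Real.log (q i))) - Real.log Z := by
    rw [Finset.sum_sub_distrib, ← Finset.sum_mul, hp1, one_mul]
  linarith

variable {H : Matrix k k ℂ} (hH : H.IsHermitian) {β : ℝ}

lemma trace_exp_eq (β : ℝ) :
    (NormedSpace.exp ((-(β : ℂ)) • H)).trace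
      = ((∑ i, Real.exp (-β * hH.eigenvalues i) : ℝ) : ℂ) := by
  have hc : (-(β : ℂ)) = ((-β : ℝ) : ℂ) := by push_cast; ring
  rw [hc, exp_smul_herm hH (-β), cfc'_trace]
  push_cast
  rfl

lemma gibbs_eq_cfc (β : ℝ) :
    gibbs β H = hH.cfc (fun x =>
      (∑ i, Real.exp (-β * hH.eigenvalues i))⁻¹ * Real.exp (-β * x)) := by
  have hc : (-(β : ℂ)) = ((-β : ℝ) : ℂ) := by push_cast; ring
  rw [gibbs, trace_exp_eq hH β, hc, exp_smul_herm hH (-β), ← Complex.ofReal_inv,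
    cfc'_smul]

lemma freeEnergy_gibbs [Nonempty k] (hβ : 0 < β) :
    freeEnergy β H (gibbs β H) =
      -β⁻¹ * Real.log (∑ i, Real.exp (-β * hH.eigenvalues i)) := by
  set Z : ℝ := ∑ i, Real.exp (-β * hH.eigenvalues i) with hZdef
  have hZpos : 0 < Z := Finset.sum_pos (fun i _ => Real.exp_pos _) Finset.univ_nonempty
  set g : ℝ → ℝ := fun x => Z⁻¹ * Real.exp (-β * x) with hgdef
  have hρ : gibbs β H = hH.cfc g := gibbs_eq_cfc hH β
  have hsum1 : ∑ i, g (hH.eigenvalues i) = 1 := by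
    rw [hgdef]
    simp only [← Finset.mul_sum, ← hZdef]
    exact inv_mul_cancel₀ hZpos.ne'
  have hS : vnEntropy (gibbs β H) = ∑ i, Real.negMulLog (g (hH.eigenvalues i)) := by
    rw [hρ]; exact vnEntropy_cfc' hH g
  have hT : ((H * gibbs β H).trace).re
      = ∑ i, hH.eigenvalues i * g (hH.eigenvalues i) := by
    have hm : H * hH.cfc g = hH.cfc (fun x => x * g x) := by
      have h := cfc'_mul hH (fun x => x) g
      rwa [cfc'_id hH] at h
    rw [hρ, hm, cfc'_trace]
    push_cast
    simp
  have hlog : ∀ x : ℝ, Real.log (g x) = -Real.log Z + (-β * x) := by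
    intro x
    rw [hgdef]
    simp only
    rw [Real.log_mul (by positivity) (Real.exp_ne_zero _), Real.log_inv, Real.log_exp]
  have hSsum : ∑ i, Real.negMulLog (g (hH.eigenvalues i))
      = Real.log Z + β * ∑ i, hH.eigenvalues i * g (hH.eigenvalues i) := by
    have hterm : ∀ i, Real.negMulLog (g (hH.eigenvalues i))
        = g (hH.eigenvalues i) * Real.log Z
          + β * (hH.eigenvalues i * g (hH.eigenvalues i)) := by
      intro i
      rw [Real.negMulLog, hlog]
      ring
    rw [Finset.sum_congr rfl (fun i _ => hterm i), Finset.sum_add_distrib,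
      ← Finset.sum_mul, hsum1, ← Finset.mul_sum]
    ring
  rw [freeEnergy, hT, hS, hSsum]
  field_simp
  ring

lemma freeEnergy_ge (hβ : 0 < β) (D : Matrix k k ℂ) (hPS : D.PosSemidef)
    (htr : D.trace = 1) :
    -β⁻¹ * Real.log (∑ i, Real.exp (-β * hH.eigenvalues i)) ≤ freeEnergy β H D := by
  classical
  have hD : D.IsHermitian := hPS.1
  set ε : k → ℝ := hH.eigenvalues with hεdef
  set p : k → ℝ := hD.eigenvalues with hpdef
  have hp0 : ∀ i, 0 ≤ p i := fun i => hPS.eigenvalues_nonneg i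
  have hp1 : ∑ i, p i = 1 := by
    have h1 : D.trace = ∑ i, (p i : ℂ) := by
      conv_lhs => rw [← cfc'_id hD]
      exact cfc'_trace hD _
    rw [htr] at h1
    have := congrArg Complex.re h1.symm
    simpa using this
  set V : Matrix k k ℂ := (hH.eigenvectorUnitary : Matrix k k ℂ) with hVdef
  set U : Matrix k k ℂ := (hD.eigenvectorUnitary : Matrix k k ℂ) with hUdef
  set W : Matrix k k ℂ := star V * U with hWdef
  have hVV : V * star V = 1 := Unitary.mul_star_self_of_mem hH.eigenvectorUnitary.2
  have hVV' : star V * V = 1 := Unitary.star_mul_self_of_mem hH.eigenvectorUnitary.2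
  have hUU : U * star U = 1 := Unitary.mul_star_self_of_mem hD.eigenvectorUnitary.2
  have hUU' : star U * U = 1 := Unitary.star_mul_self_of_mem hD.eigenvectorUnitary.2
  have hWstar : star W = star U * V := by rw [hWdef, StarMul.star_mul, star_star]
  have hWW : star W * W = 1 := by
    rw [hWstar, hWdef]
    calc star U * V * (star V * U) = star U * (V * star V) * U := by
          simp only [mul_assoc]
      _ = 1 := by rw [hVV, mul_one, hUU']
  have hWW' : W * star W = 1 := by
    rw [hWstar, hWdef]
    calc star V * U * (star U * V) = star V * (U * star U) * V := by
          simp only [mul_assoc]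
      _ = 1 := by rw [hUU, mul_one, hVV']
  set w : k → k → ℝ := fun j i => Complex.normSq (W j i) with hwdef
  have hw0 : ∀ j i, 0 ≤ w j i := fun j i => Complex.normSq_nonneg _
  have hcol : ∀ i, ∑ j, w j i = 1 := by
    intro i
    have h1 : (star W * W) i i = 1 := by rw [hWW]; simp
    rw [Matrix.mul_apply] at h1
    have h2 : ∀ j, (star W) i j * W j i = ((w j i : ℝ) : ℂ) := by
      intro j
      rw [Matrix.star_apply, hwdef]
      simp [Complex.star_def, ← Complex.normSq_eq_conj_mul_self]
    rw [Finset.sum_congr rfl (fun j _ => h2 j)] at h1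
    have := congrArg Complex.re h1
    simpa using this
  have hrow : ∀ j, ∑ i, w j i = 1 := by
    intro j
    have h1 : (W * star W) j j = 1 := by rw [hWW']; simp
    rw [Matrix.mul_apply] at h1
    have h2 : ∀ i, W j i * (star W) i j = ((w j i : ℝ) : ℂ) := by
      intro i
      rw [Matrix.star_apply, hwdef]
      simp [Complex.star_def, Complex.mul_conj]
    rw [Finset.sum_congr rfl (fun i _ => h2 i)] at h1
    have := congrArg Complex.re h1
    simpa using this
  set h : k → ℝ := fun i => ∑ j, w j i * ε j with hhdef
  set q : k → ℝ := fun i => ∑ j, w j i * Real.exp (-β * ε j) with hqdef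
  have hdiagconj : ∀ (f : ℝ → ℝ) (i : k),
      (star W * Matrix.diagonal (fun j => ((f (ε j) : ℝ) : ℂ)) * W) i i
        = ((∑ j, w j i * f (ε j) : ℝ) : ℂ) := by
    intro f i
    rw [mul_assoc, Matrix.mul_apply]
    have h2 : ∀ j, (star W) i j * (Matrix.diagonal (fun j => ((f (ε j) : ℝ) : ℂ)) * W) j i
        = ((w j i * f (ε j) : ℝ) : ℂ) := by
      intro j
      rw [Matrix.diagonal_mul, Matrix.star_apply, hwdef]
      simp only [Complex.star_def]
      rw [mul_comm ((starRingEnd ℂ) (W j i)), mul_assoc, Complex.mul_conj]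
      push_cast
      ring
    rw [Finset.sum_congr rfl (fun j _ => h2 j)]
    push_cast
    rfl
  have hdiagH : Matrix.diagonal (RCLike.ofReal ∘ hH.eigenvalues)
      = Matrix.diagonal (fun j => ((ε j : ℝ) : ℂ)) := rfl
  have hdiagD : Matrix.diagonal (RCLike.ofReal ∘ hD.eigenvalues)
      = Matrix.diagonal (fun i => ((p i : ℝ) : ℂ)) := rfl
  have hHconj : star U * H * U = star W *
      Matrix.diagonal (fun j => ((ε j : ℝ) : ℂ)) * W := by
    conv_lhs => rw [hH.spectral_theorem, Unitary.conjStarAlgAut_apply]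
    rw [hdiagH, hWstar, hWdef]
    simp only [← hVdef, mul_assoc]
  have hT : ((H * D).trace).re = ∑ i, p i * h i := by
    have h1 : H * D = H * (U * Matrix.diagonal (fun i => ((p i : ℝ) : ℂ)) * star U) := by
      conv_lhs => rw [hD.spectral_theorem, Unitary.conjStarAlgAut_apply]
      rw [hdiagD]
    have h2 : (H * D).trace
        = ((star U * H * U) * Matrix.diagonal (fun i => ((p i : ℝ) : ℂ))).trace := by
      rw [h1]
      rw [show H * (U * Matrix.diagonal (fun i => ((p i : ℝ) : ℂ)) * star U)
          = (H * U * Matrix.diagonal (fun i => ((p i : ℝ) : ℂ))) * star U by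
        simp only [mul_assoc]]
      rw [Matrix.trace_mul_comm]
      simp only [mul_assoc]
    rw [h2, hHconj]
    rw [Matrix.trace]
    have h3 : ∀ i, ((star W * Matrix.diagonal (fun j => ((ε j : ℝ) : ℂ)) * W)
        * Matrix.diagonal (fun i => ((p i : ℝ) : ℂ))).diag i = ((p i * h i : ℝ) : ℂ) := by
      intro i
      rw [Matrix.diag_apply, Matrix.mul_diagonal, hdiagconj (fun x => x) i, hhdef]
      push_cast
      ring
    rw [Finset.sum_congr rfl (fun i _ => h3 i)]
    push_cast
    simp
  set Z : ℝ := ∑ i, Real.exp (-β * ε i) with hZdef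
  have hZq : Z = ∑ i, q i := by
    rw [hZdef, hqdef]
    rw [Finset.sum_comm]
    apply Finset.sum_congr rfl
    intro j _
    rw [← Finset.sum_mul, hrow j, one_mul]
  have hPeierls : ∀ i, Real.exp (-β * h i) ≤ q i := by
    intro i
    have e1 : -β * h i = ∑ j, w j i * (-β * ε j) := by
      rw [hhdef]
      simp only
      rw [Finset.mul_sum]
      apply Finset.sum_congr rfl
      intro j _
      ring
    rw [e1]
    exact exp_sum_le (fun j => w j i) (fun j => -β * ε j) (fun j => hw0 j i) (hcol i)
  have hqpos : ∀ i, 0 < q i := fun i => lt_of_lt_of_le (Real.exp_pos _) (hPeierls i)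
  have hCG := classical_gibbs p q hp0 hp1 hqpos
  rw [← hZq] at hCG
  have hlogq : ∀ i, p i * (-β * h i) ≤ p i * Real.log (q i) := by
    intro i
    apply mul_le_mul_of_nonneg_left _ (hp0 i)
    calc -β * h i = Real.log (Real.exp (-β * h i)) := (Real.log_exp _).symm
      _ ≤ Real.log (q i) := Real.log_le_log (Real.exp_pos _) (hPeierls i)
  have hkey : (∑ i, Real.negMulLog (p i)) - β * (∑ i, p i * h i) ≤ Real.log Z := by
    have e2 : (∑ i, Real.negMulLog (p i)) - β * (∑ i, p i * h i)
        = ∑ i, (Real.negMulLog (p i) + p i * (-β * h i)) := by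
      rw [Finset.sum_add_distrib, Finset.mul_sum]
      rw [show ∑ i, p i * (-β * h i) = ∑ i, -(β * (p i * h i)) from
        Finset.sum_congr rfl (fun i _ => by ring)]
      rw [Finset.sum_neg_distrib]
      ring
    rw [e2]
    refine le_trans (Finset.sum_le_sum fun i _ => ?_) hCG
    linarith [hlogq i]
  rw [freeEnergy, hT, vnEntropy_eq hD, ← hpdef]
  have h5 := mul_le_mul_of_nonneg_left hkey (inv_nonneg.mpr hβ.le)
  have h6 : β⁻¹ * ((∑ i, Real.negMulLog (p i)) - β * (∑ i, p i * h i))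
      = β⁻¹ * (∑ i, Real.negMulLog (p i)) - (∑ i, p i * h i) := by
    field_simp
  linarith

end Auxiliary

/-- The Gibbs state minimizes the free energy functional, and its free
energy equals `-(1/β) log Tr(e^{-βH})`. -/
theorem gibbs_minimizes_freeEnergy {n : ℕ} (H : Matrix (Fin n) (Fin n) ℂ)
    (hH : H.IsHermitian) (β : ℝ) (hβ : 0 < β) :
    (∀ D : Matrix (Fin n) (Fin n) ℂ, IsDensityMatrix D →
      freeEnergy β H (gibbs β H) ≤ freeEnergy β H D) ∧
    freeEnergy β H (gibbs β H) =
      -β⁻¹ * Real.log (((NormedSpace.exp ((-(β : ℂ)) • H)).trace).re) := by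
  rcases isEmpty_or_nonempty (Fin n) with he | he
  · constructor
    · intro D hD
      have h1 := hD.2
      rw [Matrix.trace] at h1
      simp at h1
    · have h0 : ∀ A : Matrix (Fin n) (Fin n) ℂ, vnEntropy A = 0 := by
        intro A
        rw [vnEntropy]
        split <;> simp
      have h1 : ∀ A : Matrix (Fin n) (Fin n) ℂ, A.trace = 0 := by
        intro A
        rw [Matrix.trace]
        simp
      rw [freeEnergy, h0, h1, h1]
      simp
  · have heq : freeEnergy β H (gibbs β H)
        = -β⁻¹ * Real.log (∑ i, Real.exp (-β * hH.eigenvalues i)) :=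
      freeEnergy_gibbs hH hβ
    constructor
    · intro D hD
      rw [heq]
      exact freeEnergy_ge hH hβ D hD.1 hD.2
    · rw [heq, trace_exp_eq hH β, Complex.ofReal_re]


end TAL
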